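/- Let integers 0 ≤ k0 < k ≤ k1 ≤ m with α := {1,…,k0} and β := {k0+1,…,k1}, let μ_β ∈ [0,1]^{|β|} satisfy 1^⊤μ_β = k − k0, and define C and B as: C ∈ ℝ^{(|β|−1)×|β|} the forward-difference matrix with rows e_i^⊤ − e_{i+1}^⊤, and B := [1_α^⊤ μ_β^⊤ ; 0 C]. Set ρ := k² − 2k·k0 + k0·k1 (which is positive). Then B B^⊤ is invertible and the matrix Q := B^⊤(B B^⊤)^{−1}B ∈ ℝ^{(|α|+|β|)×(|α|+|β|)} is independent of the choice of μ_β and has the explicit block form: Q_{αα} = ρ^{−1}(k1 − k0)·1_α 1_α^⊤, Q_{αβ} = ρ^{−1}(k − k0)·1_α 1_β^⊤, Q_{βα} = Q_{αβ}^⊤, and Q_{ββ} = I_{|β|} − ρ^{−1}·k0·1_β 1_β^⊤. -/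

import Mathlib

open Filter Topology Matrix

noncomputable def topkSum {ι : Type*} [Fintype ι] (k : ℕ) (x : ι → ℝ) : ℝ :=
  sSup {v : ℝ | ∃ s : Finset ι, s.card = k ∧ v = ∑ i ∈ s, x i}

def Bk (m k : ℕ) : Set (Fin m → ℝ) := {x | topkSum k x ≤ 0}

noncomputable def sortDesc {m : ℕ} (x : Fin m → ℝ) : Fin m → ℝ :=
  fun i => (x ∘ Tuple.sort x) i.rev

noncomputable def ent {m : ℕ} (x : Fin m → ℝ) (i : ℕ) : ℝ :=
  if h : 1 ≤ i ∧ i ≤ m then x ⟨i - 1, by omega⟩ else 0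

noncomputable def entE {m : ℕ} (x : Fin m → ℝ) (i : ℕ) : EReal :=
  if h : 1 ≤ i ∧ i ≤ m then ((x ⟨i - 1, by omega⟩ : ℝ) : EReal)
  else if i = 0 then ⊤ else ⊥

def IsIndexPairOf {m : ℕ} (k : ℕ) (x : Fin m → ℝ) (k0 k1 : ℕ) : Prop :=
  k0 + 1 ≤ k ∧ k ≤ k1 ∧ k1 ≤ m ∧
  entE x (k0 + 1) < entE x k0 ∧
  (∀ i : ℕ, k0 + 1 ≤ i → i ≤ k1 → entE x i = entE x k) ∧
  entE x (k1 + 1) < entE x k1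

def IsEProjOn {m : ℕ} (S : Set (Fin m → ℝ)) (y p : Fin m → ℝ) : Prop :=
  p ∈ S ∧ ∀ z ∈ S, ∑ i, (y i - p i) ^ 2 ≤ ∑ i, (y i - z i) ^ 2

def ProjKKT {m : ℕ} (k : ℕ) (y ybar μ : Fin m → ℝ) (lam θ : ℝ) (k0 k1 : ℕ) : Prop :=
  IsIndexPairOf k ybar k0 k1 ∧
  (∀ i : Fin m, (i : ℕ) < k0 → ybar i = y i - lam ∧ μ i = 1) ∧
  (∀ i : Fin m, k0 ≤ (i : ℕ) → (i : ℕ) < k1 →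
      ybar i = y i - lam * μ i ∧ ybar i = θ ∧ 0 ≤ μ i ∧ μ i ≤ 1) ∧
  (∑ i : Fin m, (if k0 ≤ (i : ℕ) ∧ (i : ℕ) < k1 then μ i else 0)) = (k : ℝ) - (k0 : ℝ) ∧
  (∀ i : Fin m, k1 ≤ (i : ℕ) → ybar i = y i ∧ μ i = 0) ∧
  (∑ i : Fin m, (if (i : ℕ) < k0 then y i else 0)) - (k0 : ℝ) * lam + ((k : ℝ) - (k0 : ℝ)) * θ = 0 ∧
  0 < lam ∧
  (θ : EReal) < entE ybar k0 ∧ entE ybar (k1 + 1) < (θ : EReal)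

noncomputable def cvar {m : ℕ} (τ : ℝ) (g : Fin m → ℝ) : ℝ :=
  ⨅ t : ℝ, t + (1 / ((1 - τ) * m)) * ∑ j, max (g j - t) 0

/-- The forward-difference matrix `C ∈ ℝ^{(b-1)×b}` whose `i`-th row is `eᵢᵀ - eᵢ₊₁ᵀ`. -/
def Cmat (b : ℕ) : Matrix (Fin (b - 1)) (Fin b) ℝ :=
  Matrix.of fun i j =>
    if (j : ℕ) = (i : ℕ) then 1 else if (j : ℕ) = (i : ℕ) + 1 then -1 else 0

/-- The matrix `B = [1_αᵀ μ_βᵀ ; 0 C]` with `|α| = a`, `|β| = b`. -/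
def Bmat (a b : ℕ) (μβ : Fin b → ℝ) : Matrix (Fin b) (Fin (a + b)) ℝ :=
  Matrix.of fun i j =>
    if hi : (i : ℕ) = 0 then
      (if hj : (j : ℕ) < a then 1 else μβ ⟨(j : ℕ) - a, by have := j.isLt; omega⟩)
    else
      (if hj : (j : ℕ) < a then 0
       else Cmat b ⟨(i : ℕ) - 1, by have := i.isLt; omega⟩
              ⟨(j : ℕ) - a, by have := j.isLt; omega⟩)

/-- partial sum of first `q` entries of `μ`. -/
noncomputable def pS {b : ℕ} (μ : Fin b → ℝ) (q : ℕ) : ℝ :=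
  ∑ p : Fin b, if (p : ℕ) < q then μ p else 0

/-- the "generic" row formula of `Z`, ℕ-indexed. -/
noncomputable def zr (a b k : ℕ) (ρ : ℝ) (μ : Fin b → ℝ) (q j : ℕ) : ℝ :=
  if j < a then ρ⁻¹ * ((q : ℝ) * ((k : ℝ) - (a : ℝ)) - pS μ q * (b : ℝ))
  else (if j - a < q then 1 else 0) -
    ρ⁻¹ * ((q : ℝ) * (a : ℝ) + pS μ q * ((k : ℝ) - (a : ℝ)))

/-- top row of `Z`, ℕ-indexed. -/
noncomputable def z0 (a b k : ℕ) (ρ : ℝ) (j : ℕ) : ℝ :=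
  if j < a then ρ⁻¹ * (b : ℝ) else ρ⁻¹ * ((k : ℝ) - (a : ℝ))

noncomputable def Zmat (a b k : ℕ) (ρ : ℝ) (μ : Fin b → ℝ) :
    Matrix (Fin b) (Fin (a + b)) ℝ :=
  Matrix.of fun q j =>
    if (q : ℕ) = 0 then z0 a b k ρ (j : ℕ) else zr a b k ρ μ (q : ℕ) (j : ℕ)

noncomputable def Q0mat (a b k : ℕ) (ρ : ℝ) : Matrix (Fin (a + b)) (Fin (a + b)) ℝ :=
  Matrix.of fun i j =>
    if (i : ℕ) < a then z0 a b k ρ (j : ℕ)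
    else if (j : ℕ) < a then ρ⁻¹ * ((k : ℝ) - (a : ℝ))
    else (if (i : ℕ) = (j : ℕ) then 1 else 0) - ρ⁻¹ * (a : ℝ)

lemma pS_zero {b : ℕ} (μ : Fin b → ℝ) : pS μ 0 = 0 := by
  simp [pS]

lemma pS_top {b : ℕ} (μ : Fin b → ℝ) : pS μ b = ∑ p, μ p := by
  simp [pS, Fin.is_lt]

lemma pS_succ {b : ℕ} (μ : Fin b → ℝ) (p : ℕ) (hp : p < b) :
    pS μ (p + 1) = pS μ p + μ ⟨p, hp⟩ := by
  unfold pS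
  have : ∀ x : Fin b, (if (x : ℕ) < p + 1 then μ x else 0) =
      (if (x : ℕ) < p then μ x else 0) + (if x = ⟨p, hp⟩ then μ x else 0) := by
    intro x
    rcases lt_trichotomy (x : ℕ) p with h | h | h
    · simp [h, Nat.lt_succ_of_lt h, Fin.ext_iff, h.ne]
    · simp [h, Fin.ext_iff, Nat.lt_irrefl]
    · have : ¬ (x : ℕ) < p + 1 := by omega
      rw [if_neg this, if_neg (by omega : ¬ (x:ℕ) < p), if_neg (by simp [Fin.ext_iff]; omega)]
      simp
  rw [Finset.sum_congr rfl fun x _ => this x, Finset.sum_add_distrib,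
    Finset.sum_ite_eq' Finset.univ]
  simp

lemma zr_zero (a b k : ℕ) (ρ : ℝ) (μ : Fin b → ℝ) (j : ℕ) :
    zr a b k ρ μ 0 j = 0 := by
  unfold zr
  rw [pS_zero]
  split <;> simp

lemma zr_top (a b k : ℕ) (ρ : ℝ) (μ : Fin b → ℝ)
    (hsum : ∑ p, μ p = (k : ℝ) - (a : ℝ))
    (hρ : ρ = (a : ℝ) * (b : ℝ) + ((k : ℝ) - (a : ℝ)) ^ 2) (hρ0 : ρ ≠ 0)
    (j : ℕ) (hj : j < a + b) :
    zr a b k ρ μ b j = 0 := by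
  unfold zr
  rw [pS_top, hsum]
  split
  · ring
  · have h2 : j - a < b := by omega
    rw [if_pos h2]
    field_simp
    rw [hρ]
    ring

lemma sum_spike_nat {b : ℕ} (c : ℕ) (v : ℝ) :
    (∑ l : Fin b, if (l : ℕ) = c then v else 0) = if c < b then v else 0 := by
  by_cases h : c < b
  · rw [if_pos h]
    have h2 : ∀ l : Fin b, (if (l : ℕ) = c then v else 0) =
        if l = ⟨c, h⟩ then v else 0 := by
      intro l; simp [Fin.ext_iff]
    rw [Finset.sum_congr rfl fun l _ => h2 l, Finset.sum_ite_eq' Finset.univ]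
    simp
  · rw [if_neg h]
    apply Finset.sum_eq_zero
    intro l _
    rw [if_neg (by have := l.isLt; omega)]

lemma step_lemma (a b k : ℕ) (μ : Fin b → ℝ) (ρ : ℝ) (p j : ℕ) (hp : p < b)
    (hj : j < a + b) (hja : a ≤ j) :
    μ ⟨p, hp⟩ * z0 a b k ρ j + zr a b k ρ μ (p + 1) j - zr a b k ρ μ p j =
      (if a + p = j then 1 else 0) - ρ⁻¹ * (a : ℝ) := by
  unfold z0 zr
  rw [pS_succ μ p hp]
  rw [if_neg (by omega : ¬ j < a), if_neg (by omega : ¬ j < a), if_neg (by omega : ¬ j < a)]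
  rcases lt_trichotomy (j - a) p with h | h | h
  · rw [if_pos (by omega), if_pos h, if_neg (by omega)]
    push_cast; ring
  · rw [if_pos (by omega), if_neg (by omega), if_pos (by omega)]
    push_cast; ring
  · rw [if_neg (by omega), if_neg (by omega), if_neg (by omega)]
    push_cast; ring

lemma step_lemma_alpha (a b k : ℕ) (μ : Fin b → ℝ) (ρ : ℝ) (p j : ℕ) (hp : p < b)
    (hja : j < a) :
    μ ⟨p, hp⟩ * z0 a b k ρ j + zr a b k ρ μ (p + 1) j - zr a b k ρ μ p j =
      ρ⁻¹ * ((k : ℝ) - (a : ℝ)) := by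
  unfold z0 zr
  rw [pS_succ μ p hp]
  rw [if_pos hja, if_pos hja, if_pos hja]
  push_cast; ring

lemma BtZ_eq (a b k : ℕ) (hb : 0 < b) (μ : Fin b → ℝ)
    (hsum : ∑ p, μ p = (k : ℝ) - (a : ℝ)) (ρ : ℝ)
    (hρ : ρ = (a : ℝ) * (b : ℝ) + ((k : ℝ) - (a : ℝ)) ^ 2) (hρ0 : ρ ≠ 0) :
    (Bmat a b μ)ᵀ * Zmat a b k ρ μ = Q0mat a b k ρ := by
  ext i j
  rw [mul_apply]
  simp only [transpose_apply]
  by_cases hia : (i : ℕ) < a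
  · have hpt : ∀ l : Fin b, Bmat a b μ l i * Zmat a b k ρ μ l j =
        if l = ⟨0, hb⟩ then z0 a b k ρ (j : ℕ) else 0 := by
      intro l
      by_cases hl : (l : ℕ) = 0
      · have hle : l = ⟨0, hb⟩ := Fin.ext hl
        simp [Bmat, Zmat, hl, hia, hle]
      · have hle : ¬ l = ⟨0, hb⟩ := by simp [Fin.ext_iff, hl]
        simp [Bmat, Zmat, hl, hia, hle]
    rw [Finset.sum_congr rfl fun l _ => hpt l, Finset.sum_ite_eq' Finset.univ]
    simp [Q0mat, hia]
  · obtain ⟨p, hpdef⟩ : ∃ p, (i : ℕ) = a + p := ⟨(i : ℕ) - a, by omega⟩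
    have hsub : (i : ℕ) - a = p := by omega
    have hp : p < b := by have := i.isLt; omega
    have hpt : ∀ l : Fin b, Bmat a b μ l i * Zmat a b k ρ μ l j =
        (if (l : ℕ) = 0 then μ ⟨p, hp⟩ * z0 a b k ρ (j : ℕ) else 0) +
        (if (l : ℕ) = p + 1 then zr a b k ρ μ (p + 1) (j : ℕ) else 0) +
        (if (l : ℕ) = p then -(zr a b k ρ μ p (j : ℕ)) else 0) := by
      intro l
      by_cases hl : (l : ℕ) = 0
      · rw [if_pos hl, if_neg (by omega)]
        by_cases hlp : (l : ℕ) = p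
        · have hp0 : p = 0 := by omega
          subst hp0
          rw [if_pos hlp, zr_zero]
          simp [Bmat, Zmat, hl, hia, hsub]
        · rw [if_neg hlp]
          simp [Bmat, Zmat, hl, hia, hsub]
      · rw [if_neg hl]
        have hl1 : (l : ℕ) - 1 + 1 = (l : ℕ) := by omega
        have hB : Bmat a b μ l i =
            (if p = (l : ℕ) - 1 then 1 else if p = (l : ℕ) then -1 else 0) := by
          simp only [Bmat, Cmat, Matrix.of_apply, dif_neg hl, dif_neg hia, hsub, hl1]
        have hZ : Zmat a b k ρ μ l j = zr a b k ρ μ (l : ℕ) (j : ℕ) := by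
          simp [Zmat, hl]
        rw [hB, hZ]
        by_cases h1 : p = (l : ℕ) - 1
        · have hl2 : (l : ℕ) = p + 1 := by omega
          rw [if_pos h1, if_pos hl2, if_neg (show ¬(l : ℕ) = p by omega), ← hl2]
          ring
        · rw [if_neg h1, if_neg (show ¬(l : ℕ) = p + 1 by omega)]
          by_cases h2 : p = (l : ℕ)
          · rw [if_pos h2]
            rw [if_pos h2.symm, ← h2]
            ring
          · rw [if_neg h2]
            rw [if_neg (Ne.symm h2)]
            ring
    rw [Finset.sum_congr rfl fun l _ => hpt l, Finset.sum_add_distrib,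
      Finset.sum_add_distrib, sum_spike_nat, sum_spike_nat, sum_spike_nat,
      if_pos hb, if_pos hp]
    have h1 : (if p + 1 < b then zr a b k ρ μ (p + 1) (j : ℕ) else 0) =
        zr a b k ρ μ (p + 1) (j : ℕ) := by
      by_cases h : p + 1 < b
      · rw [if_pos h]
      · have hpb : p + 1 = b := by omega
        rw [if_neg h, hpb, zr_top a b k ρ μ hsum hρ hρ0 _ j.isLt]
    rw [h1]
    by_cases hja : (j : ℕ) < a
    · have := step_lemma_alpha a b k μ ρ p (j : ℕ) hp hja
      simp only [Q0mat, Matrix.of_apply, if_neg hia, if_pos hja]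
      linarith [this]
    · have := step_lemma a b k μ ρ p (j : ℕ) hp j.isLt (by omega)
      simp only [Q0mat, Matrix.of_apply, if_neg hia, if_neg hja]
      have hij : ((i : ℕ) = (j : ℕ)) ↔ (a + p = (j : ℕ)) := by omega
      rcases eq_or_ne (a + p) (j : ℕ) with he | he
      · rw [if_pos he] at this
        rw [if_pos (hij.mpr he)]
        linarith [this]
      · rw [if_neg he] at this
        rw [if_neg (fun hc => he (hij.mp hc))]
        linarith [this]

lemma BQ0_eq (a b k : ℕ) (hb : 0 < b) (μ : Fin b → ℝ)
    (hsum : ∑ p, μ p = (k : ℝ) - (a : ℝ)) (ρ : ℝ)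
    (hρ : ρ = (a : ℝ) * (b : ℝ) + ((k : ℝ) - (a : ℝ)) ^ 2) (hρ0 : ρ ≠ 0) :
    Bmat a b μ * Q0mat a b k ρ = Bmat a b μ := by
  ext l j
  rw [mul_apply]
  by_cases hl : (l : ℕ) = 0
  · rw [Fin.sum_univ_add]
    have hα : ∀ i : Fin a, Bmat a b μ l (Fin.castAdd b i) *
        Q0mat a b k ρ (Fin.castAdd b i) j = z0 a b k ρ (j : ℕ) := by
      intro i
      simp [Bmat, Q0mat, hl, i.isLt]
    have hβ : ∀ p : Fin b, Bmat a b μ l (Fin.natAdd a p) *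
        Q0mat a b k ρ (Fin.natAdd a p) j =
        μ p * (if (j : ℕ) < a then ρ⁻¹ * ((k : ℝ) - (a : ℝ))
               else (if a + (p : ℕ) = (j : ℕ) then 1 else 0) - ρ⁻¹ * (a : ℝ)) := by
      intro p
      have h1 : ¬ ((Fin.natAdd a p : Fin (a + b)) : ℕ) < a := by simp [Fin.natAdd]
      have h2 : ((Fin.natAdd a p : Fin (a + b)) : ℕ) - a = (p : ℕ) := by simp [Fin.natAdd]
      simp only [Bmat, Q0mat, Matrix.of_apply, dif_pos hl, dif_neg h1, if_neg h1, h2]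
      congr 1
    rw [Finset.sum_congr rfl fun i _ => hα i, Finset.sum_congr rfl fun p _ => hβ p,
      Finset.sum_const, Finset.card_univ, Fintype.card_fin, nsmul_eq_mul]
    by_cases hja : (j : ℕ) < a
    · simp only [if_pos hja, z0, ← Finset.sum_mul, hsum]
      simp only [Bmat, Matrix.of_apply, dif_pos hl, dif_pos hja, if_pos hja]
      field_simp
      rw [hρ]
    · have hq : (j : ℕ) - a < b := by have := j.isLt; omega
      have hps : ∀ p : Fin b, μ p * ((if a + (p : ℕ) = (j : ℕ) then 1 else 0) - ρ⁻¹ * (a : ℝ)) =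
          (if p = ⟨(j : ℕ) - a, hq⟩ then μ p else 0) - μ p * (ρ⁻¹ * (a : ℝ)) := by
        intro p
        by_cases h : a + (p : ℕ) = (j : ℕ)
        · rw [if_pos h, if_pos (by simp [Fin.ext_iff]; omega)]; ring
        · rw [if_neg h, if_neg (by simp [Fin.ext_iff]; omega)]; ring
      simp only [if_neg hja]
      rw [Finset.sum_congr rfl fun p _ => hps p, Finset.sum_sub_distrib,
        Finset.sum_ite_eq' Finset.univ, ← Finset.sum_mul, hsum]
      simp only [Finset.mem_univ, if_pos, z0, if_neg hja]
      simp only [Bmat, Matrix.of_apply, dif_pos hl, dif_neg hja]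
      ring
  · obtain ⟨p, hpdef⟩ : ∃ p, (l : ℕ) = p + 1 := ⟨(l : ℕ) - 1, by omega⟩
    have hpb : p + 1 < b := by have := l.isLt; omega
    have key : ∀ i : Fin (a + b), Bmat a b μ l i * Q0mat a b k ρ i j =
        (if (i : ℕ) = a + p then
          (if (j : ℕ) < a then ρ⁻¹ * ((k : ℝ) - (a : ℝ))
           else (if a + p = (j : ℕ) then 1 else 0) - ρ⁻¹ * (a : ℝ)) else 0) +
        (if (i : ℕ) = a + p + 1 then
          -(if (j : ℕ) < a then ρ⁻¹ * ((k : ℝ) - (a : ℝ))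
            else (if a + (p + 1) = (j : ℕ) then 1 else 0) - ρ⁻¹ * (a : ℝ)) else 0) := by
      intro i
      by_cases hia : (i : ℕ) < a
      · rw [if_neg (by omega), if_neg (by omega)]
        simp [Bmat, hl, hia]
      · have hB : Bmat a b μ l i =
            (if (i : ℕ) - a = p then 1 else if (i : ℕ) - a = p + 1 then -1 else 0) := by
          simp only [Bmat, Cmat, Matrix.of_apply, dif_neg hl, dif_neg hia]
          have : (l : ℕ) - 1 = p := by omega
          simp [this]
        have hQ : Q0mat a b k ρ i j =
            (if (j : ℕ) < a then ρ⁻¹ * ((k : ℝ) - (a : ℝ))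
             else (if (i : ℕ) = (j : ℕ) then 1 else 0) - ρ⁻¹ * (a : ℝ)) := by
          simp [Q0mat, hia]
        rw [hB, hQ]
        rcases lt_trichotomy ((i : ℕ) - a) p with h | h | h
        · rw [if_neg (show ¬(i : ℕ) - a = p by omega),
            if_neg (show ¬(i : ℕ) - a = p + 1 by omega),
            if_neg (show ¬(i : ℕ) = a + p by omega),
            if_neg (show ¬(i : ℕ) = a + p + 1 by omega)]
          ring
        · rw [if_pos h, if_pos (show (i : ℕ) = a + p by omega),
            if_neg (show ¬(i : ℕ) = a + p + 1 by omega)]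
          have hiff : ((i : ℕ) = (j : ℕ)) ↔ (a + p = (j : ℕ)) := by omega
          rw [if_congr hiff rfl rfl]
          ring
        · rcases eq_or_ne ((i : ℕ) - a) (p + 1) with h2 | h2
          · rw [if_neg (show ¬(i : ℕ) - a = p by omega), if_pos h2,
              if_neg (show ¬(i : ℕ) = a + p by omega),
              if_pos (show (i : ℕ) = a + p + 1 by omega)]
            have hiff : ((i : ℕ) = (j : ℕ)) ↔ (a + (p + 1) = (j : ℕ)) := by omega
            rw [if_congr hiff rfl rfl]
            ring
          · rw [if_neg (show ¬(i : ℕ) - a = p by omega), if_neg h2,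
              if_neg (show ¬(i : ℕ) = a + p by omega),
              if_neg (show ¬(i : ℕ) = a + p + 1 by omega)]
            ring
    rw [Finset.sum_congr rfl fun i _ => key i, Finset.sum_add_distrib,
      sum_spike_nat, sum_spike_nat, if_pos (by omega : a + p < a + b),
      if_pos (by omega : a + p + 1 < a + b)]
    by_cases hja : (j : ℕ) < a
    · rw [if_pos hja, if_pos hja]
      simp [Bmat, hl, hja]
    · rw [if_neg hja, if_neg hja]
      have hB : Bmat a b μ l j =
          (if (j : ℕ) - a = p then 1 else if (j : ℕ) - a = p + 1 then -1 else 0) := by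
        simp only [Bmat, Cmat, Matrix.of_apply, dif_neg hl, dif_neg hja]
        have : (l : ℕ) - 1 = p := by omega
        simp [this]
      rw [hB]
      rcases lt_trichotomy ((j : ℕ) - a) p with h | h | h
      · rw [if_neg (show ¬a + p = (j : ℕ) by omega),
          if_neg (show ¬a + (p + 1) = (j : ℕ) by omega),
          if_neg (show ¬(j : ℕ) - a = p by omega),
          if_neg (show ¬(j : ℕ) - a = p + 1 by omega)]
        ring
      · rw [if_pos (show a + p = (j : ℕ) by omega),
          if_neg (show ¬a + (p + 1) = (j : ℕ) by omega), if_pos h]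
        ring
      · rcases eq_or_ne ((j : ℕ) - a) (p + 1) with h2 | h2
        · rw [if_neg (show ¬a + p = (j : ℕ) by omega),
            if_pos (show a + (p + 1) = (j : ℕ) by omega),
            if_neg (show ¬(j : ℕ) - a = p by omega), if_pos h2]
          ring
        · rw [if_neg (show ¬a + p = (j : ℕ) by omega),
            if_neg (show ¬a + (p + 1) = (j : ℕ) by omega),
            if_neg (show ¬(j : ℕ) - a = p by omega), if_neg h2]
          ring

lemma BZt_eq (a b k : ℕ) (hb : 0 < b) (μ : Fin b → ℝ)
    (hsum : ∑ p, μ p = (k : ℝ) - (a : ℝ)) (ρ : ℝ)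
    (hρ : ρ = (a : ℝ) * (b : ℝ) + ((k : ℝ) - (a : ℝ)) ^ 2) (hρ0 : ρ ≠ 0) :
    Bmat a b μ * (Zmat a b k ρ μ)ᵀ = 1 := by
  ext l q
  rw [mul_apply]
  simp only [transpose_apply]
  by_cases hl : (l : ℕ) = 0
  · rw [Fin.sum_univ_add]
    by_cases hq : (q : ℕ) = 0
    · have hα : ∀ i : Fin a, Bmat a b μ l (Fin.castAdd b i) *
          Zmat a b k ρ μ q (Fin.castAdd b i) = ρ⁻¹ * (b : ℝ) := by
        intro i
        simp [Bmat, Zmat, z0, hl, hq, i.isLt]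
      have hβ : ∀ p : Fin b, Bmat a b μ l (Fin.natAdd a p) *
          Zmat a b k ρ μ q (Fin.natAdd a p) = μ p * (ρ⁻¹ * ((k : ℝ) - (a : ℝ))) := by
        intro p
        have h1 : ¬ ((Fin.natAdd a p : Fin (a + b)) : ℕ) < a := by simp [Fin.natAdd]
        have h2 : ((Fin.natAdd a p : Fin (a + b)) : ℕ) - a = (p : ℕ) := by simp [Fin.natAdd]
        simp only [Bmat, Zmat, z0, Matrix.of_apply, dif_pos hl, dif_neg h1, if_pos hq,
          if_neg h1, h2]
      rw [Finset.sum_congr rfl fun i _ => hα i, Finset.sum_congr rfl fun p _ => hβ p,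
        Finset.sum_const, Finset.card_univ, Fintype.card_fin, nsmul_eq_mul,
        ← Finset.sum_mul, hsum]
      have hlq : l = q := by apply Fin.ext; omega
      rw [hlq, Matrix.one_apply_eq]
      field_simp
      rw [hρ]
    · have hα : ∀ i : Fin a, Bmat a b μ l (Fin.castAdd b i) *
          Zmat a b k ρ μ q (Fin.castAdd b i) =
          ρ⁻¹ * ((q : ℝ) * ((k : ℝ) - (a : ℝ)) - pS μ (q : ℕ) * (b : ℝ)) := by
        intro i
        simp [Bmat, Zmat, zr, hl, hq, i.isLt]
      have hβ : ∀ p : Fin b, Bmat a b μ l (Fin.natAdd a p) *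
          Zmat a b k ρ μ q (Fin.natAdd a p) =
          (if (p : ℕ) < (q : ℕ) then μ p else 0) -
            μ p * (ρ⁻¹ * ((q : ℝ) * (a : ℝ) + pS μ (q : ℕ) * ((k : ℝ) - (a : ℝ)))) := by
        intro p
        have h1 : ¬ ((Fin.natAdd a p : Fin (a + b)) : ℕ) < a := by simp [Fin.natAdd]
        have h2 : ((Fin.natAdd a p : Fin (a + b)) : ℕ) - a = (p : ℕ) := by simp [Fin.natAdd]
        simp only [Bmat, Zmat, zr, Matrix.of_apply, dif_pos hl, dif_neg h1, if_neg hq,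
          if_neg h1, h2]
        by_cases h3 : (p : ℕ) < (q : ℕ)
        · rw [if_pos h3, if_pos h3]; ring
        · rw [if_neg h3, if_neg h3]; ring
      rw [Finset.sum_congr rfl fun i _ => hα i, Finset.sum_congr rfl fun p _ => hβ p,
        Finset.sum_const, Finset.card_univ, Fintype.card_fin, nsmul_eq_mul,
        Finset.sum_sub_distrib, ← Finset.sum_mul, hsum]
      have hS : ∑ p : Fin b, (if (p : ℕ) < (q : ℕ) then μ p else 0) = pS μ (q : ℕ) := rfl
      rw [hS, Matrix.one_apply_ne (show l ≠ q by simp [Fin.ext_iff]; omega)]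
      field_simp
      rw [hρ]
      ring
  · obtain ⟨p, hpdef⟩ : ∃ p, (l : ℕ) = p + 1 := ⟨(l : ℕ) - 1, by omega⟩
    have hpb : p + 1 < b := by have := l.isLt; omega
    have key : ∀ i : Fin (a + b), Bmat a b μ l i * Zmat a b k ρ μ q i =
        (if (i : ℕ) = a + p then
          (if (q : ℕ) = 0 then ρ⁻¹ * ((k : ℝ) - (a : ℝ))
           else (if p < (q : ℕ) then 1 else 0) -
             ρ⁻¹ * ((q : ℝ) * (a : ℝ) + pS μ (q : ℕ) * ((k : ℝ) - (a : ℝ)))) else 0) +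
        (if (i : ℕ) = a + p + 1 then
          -(if (q : ℕ) = 0 then ρ⁻¹ * ((k : ℝ) - (a : ℝ))
            else (if p + 1 < (q : ℕ) then 1 else 0) -
              ρ⁻¹ * ((q : ℝ) * (a : ℝ) + pS μ (q : ℕ) * ((k : ℝ) - (a : ℝ)))) else 0) := by
      intro i
      by_cases hia : (i : ℕ) < a
      · rw [if_neg (show ¬(i : ℕ) = a + p by omega),
          if_neg (show ¬(i : ℕ) = a + p + 1 by omega)]
        simp [Bmat, hl, hia]
      · have hB : Bmat a b μ l i =
            (if (i : ℕ) - a = p then 1 else if (i : ℕ) - a = p + 1 then -1 else 0) := by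
          simp only [Bmat, Cmat, Matrix.of_apply, dif_neg hl, dif_neg hia]
          have : (l : ℕ) - 1 = p := by omega
          simp [this]
        have hZ : Zmat a b k ρ μ q i =
            (if (q : ℕ) = 0 then ρ⁻¹ * ((k : ℝ) - (a : ℝ))
             else (if (i : ℕ) - a < (q : ℕ) then 1 else 0) -
               ρ⁻¹ * ((q : ℝ) * (a : ℝ) + pS μ (q : ℕ) * ((k : ℝ) - (a : ℝ)))) := by
          simp only [Zmat, zr, z0, Matrix.of_apply, if_neg hia]
        rw [hB, hZ]
        rcases lt_trichotomy ((i : ℕ) - a) p with h | h | h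
        · rw [if_neg (show ¬(i : ℕ) - a = p by omega),
            if_neg (show ¬(i : ℕ) - a = p + 1 by omega),
            if_neg (show ¬(i : ℕ) = a + p by omega),
            if_neg (show ¬(i : ℕ) = a + p + 1 by omega)]
          ring
        · rw [if_pos h, if_pos (show (i : ℕ) = a + p by omega),
            if_neg (show ¬(i : ℕ) = a + p + 1 by omega)]
          have hiff : ((i : ℕ) - a < (q : ℕ)) ↔ (p < (q : ℕ)) := by omega
          rw [if_congr hiff rfl rfl]
          ring
        · rcases eq_or_ne ((i : ℕ) - a) (p + 1) with h2 | h2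
          · rw [if_neg (show ¬(i : ℕ) - a = p by omega), if_pos h2,
              if_neg (show ¬(i : ℕ) = a + p by omega),
              if_pos (show (i : ℕ) = a + p + 1 by omega)]
            have hiff : ((i : ℕ) - a < (q : ℕ)) ↔ (p + 1 < (q : ℕ)) := by omega
            rw [if_congr hiff rfl rfl]
            ring
          · rw [if_neg (show ¬(i : ℕ) - a = p by omega), if_neg h2,
              if_neg (show ¬(i : ℕ) = a + p by omega),
              if_neg (show ¬(i : ℕ) = a + p + 1 by omega)]
            ring
    rw [Finset.sum_congr rfl fun i _ => key i, Finset.sum_add_distrib,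
      sum_spike_nat, sum_spike_nat, if_pos (by omega : a + p < a + b),
      if_pos (by omega : a + p + 1 < a + b)]
    by_cases hq : (q : ℕ) = 0
    · rw [if_pos hq, if_pos hq, Matrix.one_apply_ne (show l ≠ q by simp [Fin.ext_iff]; omega)]
      ring
    · rw [if_neg hq, if_neg hq]
      rcases eq_or_ne (q : ℕ) (p + 1) with h | h
      · rw [if_pos (show p < (q : ℕ) by omega),
          if_neg (show ¬p + 1 < (q : ℕ) by omega),
          (show l = q by apply Fin.ext; omega), Matrix.one_apply_eq]
        ring
      · have hlq : l ≠ q := by simp [Fin.ext_iff]; omega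
        rw [Matrix.one_apply_ne hlq]
        by_cases h3 : p < (q : ℕ)
        · rw [if_pos h3, if_pos (show p + 1 < (q : ℕ) by omega)]
          ring
        · rw [if_neg h3, if_neg (show ¬p + 1 < (q : ℕ) by omega)]
          ring

lemma Q0_symm (a b k : ℕ) (ρ : ℝ) : (Q0mat a b k ρ)ᵀ = Q0mat a b k ρ := by
  ext i j
  simp only [transpose_apply, Q0mat, Matrix.of_apply, z0]
  by_cases hi : (i : ℕ) < a <;> by_cases hj : (j : ℕ) < a <;>
    simp [hi, hj, eq_comm]

lemma Q_master (a b k : ℕ) (hb : 0 < b) (μ : Fin b → ℝ)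
    (hsum : ∑ p, μ p = (k : ℝ) - (a : ℝ)) (ρ : ℝ)
    (hρ : ρ = (a : ℝ) * (b : ℝ) + ((k : ℝ) - (a : ℝ)) ^ 2) (hρ0 : ρ ≠ 0) :
    IsUnit (Bmat a b μ * (Bmat a b μ)ᵀ) ∧
    (Bmat a b μ)ᵀ * (Bmat a b μ * (Bmat a b μ)ᵀ)⁻¹ * Bmat a b μ = Q0mat a b k ρ := by
  set B := Bmat a b μ with hB
  set Z := Zmat a b k ρ μ with hZdef
  have h1 : Bᵀ * Z = Q0mat a b k ρ := BtZ_eq a b k hb μ hsum ρ hρ hρ0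
  have h2 : B * Q0mat a b k ρ = B := BQ0_eq a b k hb μ hsum ρ hρ hρ0
  have h3 : B * Zᵀ = 1 := BZt_eq a b k hb μ hsum ρ hρ hρ0
  have hZB : Zᵀ * B = Q0mat a b k ρ := by
    have := congrArg Matrix.transpose h1
    rwa [Matrix.transpose_mul, Matrix.transpose_transpose, Q0_symm] at this
  have hZBt : Z * Bᵀ = 1 := by
    have := congrArg Matrix.transpose h3
    rwa [Matrix.transpose_mul, Matrix.transpose_transpose, Matrix.transpose_one] at this
  have hright : (B * Bᵀ) * (Z * Zᵀ) = 1 := by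
    calc (B * Bᵀ) * (Z * Zᵀ) = B * (Bᵀ * Z) * Zᵀ := by
          rw [Matrix.mul_assoc, Matrix.mul_assoc, Matrix.mul_assoc]
      _ = B * Q0mat a b k ρ * Zᵀ := by rw [h1]
      _ = B * Zᵀ := by rw [h2]
      _ = 1 := h3
  refine ⟨(Matrix.isUnit_iff_isUnit_det (A := B * Bᵀ)).mpr (Matrix.isUnit_det_of_right_inverse hright), ?_⟩
  rw [Matrix.inv_eq_right_inv hright]
  have hZQ : Z * Q0mat a b k ρ = Z := by
    rw [← h1, ← Matrix.mul_assoc, hZBt, Matrix.one_mul]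
  calc Bᵀ * (Z * Zᵀ) * B = (Bᵀ * Z) * (Zᵀ * B) := by
        rw [Matrix.mul_assoc, Matrix.mul_assoc, Matrix.mul_assoc]
    _ = Q0mat a b k ρ * Q0mat a b k ρ := by rw [h1, hZB]
    _ = (Bᵀ * Z) * Q0mat a b k ρ := by rw [h1]
    _ = Bᵀ * (Z * Q0mat a b k ρ) := by rw [Matrix.mul_assoc]
    _ = Bᵀ * Z := by rw [hZQ]
    _ = Q0mat a b k ρ := h1

/-- With `ρ = k² - 2k·k0 + k0·k1 > 0`, the matrix `B Bᵀ` is invertible and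
`Q = Bᵀ(B Bᵀ)⁻¹B` is independent of the choice of `μ_β` and has the explicit block form
`Q_αα = ρ⁻¹(k1-k0)·1 1ᵀ`, `Q_αβ = ρ⁻¹(k-k0)·1 1ᵀ`, `Q_βα = Q_αβᵀ`,
`Q_ββ = I - ρ⁻¹ k0 · 1 1ᵀ`. -/
theorem Q_explicit_form
    (m k k0 k1 : ℕ) (hk0 : k0 < k) (hkk1 : k ≤ k1) (hk1m : k1 ≤ m)
    (μβ : Fin (k1 - k0) → ℝ)
    (hμ : ∀ j, 0 ≤ μβ j ∧ μβ j ≤ 1)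
    (hsum : ∑ j, μβ j = (k : ℝ) - (k0 : ℝ))
    (ρ : ℝ) (hρ : ρ = (k : ℝ) ^ 2 - 2 * (k : ℝ) * (k0 : ℝ) + (k0 : ℝ) * (k1 : ℝ)) :
    0 < ρ ∧
    IsUnit (Bmat k0 (k1 - k0) μβ * (Bmat k0 (k1 - k0) μβ)ᵀ) ∧
    (∀ i j : Fin (k0 + (k1 - k0)),
      ((Bmat k0 (k1 - k0) μβ)ᵀ *
          (Bmat k0 (k1 - k0) μβ * (Bmat k0 (k1 - k0) μβ)ᵀ)⁻¹ *
          Bmat k0 (k1 - k0) μβ) i j =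
        if (i : ℕ) < k0 then
          (if (j : ℕ) < k0 then ρ⁻¹ * ((k1 : ℝ) - (k0 : ℝ))
           else ρ⁻¹ * ((k : ℝ) - (k0 : ℝ)))
        else
          (if (j : ℕ) < k0 then ρ⁻¹ * ((k : ℝ) - (k0 : ℝ))
           else (if i = j then 1 else 0) - ρ⁻¹ * (k0 : ℝ))) ∧
    (∀ μβ' : Fin (k1 - k0) → ℝ, (∀ j, 0 ≤ μβ' j ∧ μβ' j ≤ 1) →
      (∑ j, μβ' j = (k : ℝ) - (k0 : ℝ)) →
      (Bmat k0 (k1 - k0) μβ')ᵀ *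
          (Bmat k0 (k1 - k0) μβ' * (Bmat k0 (k1 - k0) μβ')ᵀ)⁻¹ *
          Bmat k0 (k1 - k0) μβ' =
        (Bmat k0 (k1 - k0) μβ)ᵀ *
          (Bmat k0 (k1 - k0) μβ * (Bmat k0 (k1 - k0) μβ)ᵀ)⁻¹ *
          Bmat k0 (k1 - k0) μβ) := by
  have hb : 0 < k1 - k0 := by omega
  have hcast : ((k1 - k0 : ℕ) : ℝ) = (k1 : ℝ) - (k0 : ℝ) := by
    rw [Nat.cast_sub (by omega : k0 ≤ k1)]
  have hρ2 : ρ = (k0 : ℝ) * ((k1 - k0 : ℕ) : ℝ) + ((k : ℝ) - (k0 : ℝ)) ^ 2 := by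
    rw [hρ, hcast]; ring
  have hρpos : 0 < ρ := by
    have h1 : (k0 : ℝ) + 1 ≤ (k : ℝ) := by exact_mod_cast hk0
    have h2 : (0 : ℝ) ≤ (k0 : ℝ) * ((k1 - k0 : ℕ) : ℝ) := by positivity
    nlinarith [hρ2]
  have hρ0 : ρ ≠ 0 := ne_of_gt hρpos
  obtain ⟨hunit, hQ⟩ := Q_master k0 (k1 - k0) k hb μβ hsum ρ hρ2 hρ0
  refine ⟨hρpos, hunit, ?_, ?_⟩
  · intro i j
    rw [hQ]
    simp only [Q0mat, Matrix.of_apply, z0, hcast]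
    by_cases hi : (i : ℕ) < k0 <;> by_cases hj : (j : ℕ) < k0 <;>
      simp [hi, hj, Fin.ext_iff]
  · intro μβ' hμ' hsum'
    obtain ⟨_, hQ'⟩ := Q_master k0 (k1 - k0) k hb μβ' hsum' ρ hρ2 hρ0
    rw [hQ, hQ']
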